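/- For a line network of length L in which every link is the same packet erasure channel with erasure probability ε, the batched-code capacity with batch size M and inner block-length N satisfies C_L(M,N) ≤ ((1−ε^N)^L / N) · min{ M·log|𝒜| , N·log|𝒬ₒ| }. -/

import Mathlib

open scoped BigOperators

def IsDist {α : Type*} [Fintype α] (p : α → ℝ) : Prop :=
  (∀ x, 0 ≤ p x) ∧ ∑ x, p x = 1

def IsStoch {α β : Type*} [Fintype α] [Fintype β] (W : Matrix α β ℝ) : Prop :=
  ∀ x, (∀ y, 0 ≤ W x y) ∧ ∑ y, W x y = 1

/-- Mutual information `I(p, W)` (base-2 logarithm) between the input of channel `W`,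
distributed according to `p`, and the corresponding output. -/
noncomputable def mutualInfo {α β : Type*} [Fintype α] [Fintype β]
    (p : α → ℝ) (W : Matrix α β ℝ) : ℝ :=
  ∑ x, ∑ y, p x * W x y * Real.logb 2 (W x y / ∑ x', p x' * W x' y)

/-- `N`-fold memoryless extension `Q^{⊗N}` of a channel. -/
noncomputable def tensorPow {α β : Type*} [Fintype α] [Fintype β] (N : ℕ)
    (Q : Matrix α β ℝ) : Matrix (Fin N → α) (Fin N → β) ℝ :=
  Matrix.of fun u y => ∏ i, Q (u i) (y i)

/-- `chain Q Φ n = Q 0 * Φ 0 * Q 1 * Φ 1 * ⋯ * Q n`. -/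
noncomputable def chain {β γ : Type*} [Fintype β] [Fintype γ]
    (Q : ℕ → Matrix β γ ℝ) (Φ : ℕ → Matrix γ β ℝ) : ℕ → Matrix β γ ℝ
  | 0 => Q 0
  | (n+1) => chain Q Φ n * Φ n * Q (n+1)

/-- End-to-end transition matrix `W_L = F Q₁^{⊗N} Φ₁ Q₂^{⊗N} ⋯ Φ_{L-1} Q_L^{⊗N}` of a
batched code with batch alphabet `A`, batch size `M`, inner block-length `N`,
over the line network of length `L` whose `ℓ`-th link is the DMC `Q (ℓ-1)` (0-indexed). -/
noncomputable def endToEnd {A Qi Qo : Type*} [Fintype A] [Fintype Qi] [Fintype Qo]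
    (L M N : ℕ)
    (F : Matrix (Fin M → A) (Fin N → Qi) ℝ)
    (Q : ℕ → Matrix Qi Qo ℝ)
    (Φ : ℕ → Matrix (Fin N → Qo) (Fin N → Qi) ℝ) :
    Matrix (Fin M → A) (Fin N → Qo) ℝ :=
  F * chain (fun ℓ => tensorPow N (Q ℓ)) Φ (L - 1)

/-- Shannon capacity of a DMC, as the supremum of mutual information over input
distributions. -/
noncomputable def capacity {α β : Type*} [Fintype α] [Fintype β] (W : Matrix α β ℝ) : ℝ :=
  sSup {I : ℝ | ∃ p : α → ℝ, IsDist p ∧ I = mutualInfo p W}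

/-- The packet erasure channel with packet alphabet `A` and erasure probability `ε`:
input and output alphabets are `Option A` (`none` is the erasure `e`); a packet is
delivered with probability `1 - ε` and erased with probability `ε`, and the input `e`
always yields output `e`. -/
noncomputable def eraCh (A : Type*) [DecidableEq A] (ε : ℝ) :
    Matrix (Option A) (Option A) ℝ :=
  Matrix.of fun x y =>
    match x with
    | none => if y = none then 1 else 0
    | some a => if y = some a then 1 - ε else if y = none then ε else 0

/-- For a line network of length `L` of identical packet erasure
channels with erasure probability `ε`, the batched-code capacity with batch size `M`
and inner block-length `N` satisfies
`C_L(M,N) ≤ ((1-ε^N)^L / N) · min{M log|A|, N log|Option A|}`: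
every batched code's rate obeys this bound. -/
lemma sub_le_mul_log {a b : ℝ} (ha : 0 ≤ a) (hb : 0 ≤ b) (h : b = 0 → a = 0) :
    a - b ≤ a * Real.log (a / b) := by
  rcases eq_or_lt_of_le ha with h0 | hapos
  · simp [← h0]; linarith [hb]
  · have hbpos : 0 < b := by
      rcases eq_or_lt_of_le hb with h0 | hh
      · exact absurd (h h0.symm) hapos.ne'
      · exact hh
    have hlog := Real.log_le_sub_one_of_pos (div_pos hbpos hapos)
    have hrw : Real.log (a / b) = - Real.log (b / a) := by
      rw [show a / b = (b / a)⁻¹ by rw [inv_div], Real.log_inv]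
    rw [hrw]
    have hmul : a * Real.log (b / a) ≤ a * (b / a - 1) :=
      mul_le_mul_of_nonneg_left hlog ha
    have h2 : a * (b / a - 1) = b - a := by field_simp
    nlinarith

lemma logsum2 {a1 a2 b1 b2 : ℝ} (ha1 : 0 ≤ a1) (ha2 : 0 ≤ a2) (hb1 : 0 ≤ b1) (hb2 : 0 ≤ b2)
    (h1 : b1 = 0 → a1 = 0) (h2 : b2 = 0 → a2 = 0) :
    (a1 + a2) * Real.log ((a1 + a2) / (b1 + b2))
      ≤ a1 * Real.log (a1 / b1) + a2 * Real.log (a2 / b2) := by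
  rcases eq_or_lt_of_le (add_nonneg ha1 ha2) with hs0 | hspos
  · have e1 : a1 = 0 := by linarith
    have e2 : a2 = 0 := by linarith
    simp [e1, e2]
  · have htpos : 0 < b1 + b2 := by
      rcases eq_or_lt_of_le (add_nonneg hb1 hb2) with ht0 | hh
      · exfalso
        have e1 := h1 (by linarith)
        have e2 := h2 (by linarith)
        linarith
      · exact hh
    have key : ∀ a b : ℝ, 0 ≤ a → 0 ≤ b → (b = 0 → a = 0) →
        a * Real.log ((a1 + a2) / (b1 + b2)) + a - b * ((a1 + a2) / (b1 + b2))
          ≤ a * Real.log (a / b) := by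
      intro a b ha hb hba
      rcases eq_or_lt_of_le ha with h0 | hapos
      · have hbs : 0 ≤ b * ((a1 + a2) / (b1 + b2)) :=
          mul_nonneg hb (div_pos hspos htpos).le
        rw [← h0]
        simp
        linarith
      · have hbpos : 0 < b := by
          rcases eq_or_lt_of_le hb with h0 | hh
          · exact absurd (hba h0.symm) hapos.ne'
          · exact hh
        have hst : 0 < (a1 + a2) / (b1 + b2) := div_pos hspos htpos
        have hmain : a - b * ((a1 + a2) / (b1 + b2))
            ≤ a * Real.log (a / (b * ((a1 + a2) / (b1 + b2)))) :=
          sub_le_mul_log ha (by positivity) (fun hh => absurd hh (by positivity))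
        have hsplit : Real.log (a / (b * ((a1 + a2) / (b1 + b2))))
            = Real.log (a / b) - Real.log ((a1 + a2) / (b1 + b2)) := by
          rw [show a / (b * ((a1 + a2) / (b1 + b2)))
              = (a / b) / ((a1 + a2) / (b1 + b2)) by field_simp]
          exact Real.log_div (by positivity) (by positivity)
        rw [hsplit] at hmain
        nlinarith
    have k1 := key a1 b1 ha1 hb1 h1
    have k2 := key a2 b2 ha2 hb2 h2
    have ht' : (b1 + b2) * ((a1 + a2) / (b1 + b2)) = a1 + a2 := by field_simp
    nlinarith [k1, k2]


section Aux
variable {α β γ : Type*} [Fintype α] [Fintype β] [Fintype γ]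

lemma isStoch_mul {W1 : Matrix α β ℝ} {W2 : Matrix β γ ℝ}
    (h1 : IsStoch W1) (h2 : IsStoch W2) : IsStoch (W1 * W2) := by
  intro x
  constructor
  · intro y
    rw [Matrix.mul_apply]
    exact Finset.sum_nonneg fun z _ => mul_nonneg ((h1 x).1 z) ((h2 z).1 y)
  · simp only [Matrix.mul_apply]
    rw [Finset.sum_comm]
    calc ∑ z, ∑ y, W1 x z * W2 z y = ∑ z, W1 x z * ∑ y, W2 z y := by
          simp [Finset.mul_sum]
      _ = 1 := by
          simp only [fun z => (h2 z).2, mul_one]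
          exact (h1 x).2

/-- `W` is a convex mixture `c • G + (1-c) • (const-row v)`. -/
def IsMix (c : ℝ) (W : Matrix α β ℝ) : Prop :=
  ∃ G : Matrix α β ℝ, ∃ v : β → ℝ, IsStoch G ∧ IsDist v ∧
    ∀ x y, W x y = c * G x y + (1 - c) * v y

lemma IsMix.isStoch {c : ℝ} {W : Matrix α β ℝ} (h : IsMix c W)
    (h0 : 0 ≤ c) (h1 : c ≤ 1) : IsStoch W := by
  obtain ⟨G, v, hG, hv, hW⟩ := h
  intro x
  constructor
  · intro y
    rw [hW]
    have := (hG x).1 y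
    have := hv.1 y
    nlinarith
  · simp only [hW]
    rw [Finset.sum_add_distrib, ← Finset.mul_sum, ← Finset.mul_sum, (hG x).2, hv.2]
    ring

lemma IsMix.mul_stoch {c : ℝ} {W : Matrix α β ℝ} {Φ : Matrix β γ ℝ}
    (h : IsMix c W) (hΦ : IsStoch Φ) : IsMix c (W * Φ) := by
  obtain ⟨G, v, hG, hv, hW⟩ := h
  refine ⟨G * Φ, fun y => ∑ z, v z * Φ z y, isStoch_mul hG hΦ, ⟨?_, ?_⟩, ?_⟩
  · intro y; exact Finset.sum_nonneg fun z _ => mul_nonneg (hv.1 z) ((hΦ z).1 y)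
  · rw [Finset.sum_comm]
    calc ∑ z, ∑ y, v z * Φ z y = ∑ z, v z * ∑ y, Φ z y := by simp [Finset.mul_sum]
      _ = 1 := by simp only [fun z => (hΦ z).2, mul_one]; exact hv.2
  · intro x y
    simp only [Matrix.mul_apply, hW]
    rw [Finset.mul_sum, Finset.mul_sum, ← Finset.sum_add_distrib]
    congr 1; ext z; ring

lemma stoch_mul_mix {c : ℝ} {F : Matrix α β ℝ} {W : Matrix β γ ℝ}
    (hF : IsStoch F) (h : IsMix c W) : IsMix c (F * W) := by
  obtain ⟨G, v, hG, hv, hW⟩ := h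
  refine ⟨F * G, v, isStoch_mul hF hG, hv, ?_⟩
  intro x y
  simp only [Matrix.mul_apply, hW]
  have e : ∀ z, F x z * (c * G z y + (1 - c) * v y)
      = c * (F x z * G z y) + ((1 - c) * v y) * F x z := fun z => by ring
  rw [Finset.sum_congr rfl fun z _ => e z, Finset.sum_add_distrib,
    ← Finset.mul_sum, ← Finset.mul_sum, (hF x).2]
  ring

lemma mix_mul_mix {a b : ℝ} {X : Matrix α β ℝ} {Y : Matrix β γ ℝ}
    (ha0 : 0 ≤ a) (ha1 : a ≤ 1) (hb0 : 0 ≤ b) (hb1 : b ≤ 1) (hab : a * b < 1)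
    (hX : IsMix a X) (hY : IsMix b Y) : IsMix (a * b) (X * Y) := by
  obtain ⟨G1, v1, hG1, hv1, hX'⟩ := hX
  obtain ⟨G2, v2, hG2, hv2, hY'⟩ := hY
  have hab0 : (0:ℝ) < 1 - a * b := by linarith
  set w : γ → ℝ := fun y => ∑ z, v1 z * G2 z y with hw
  have hwD : IsDist w := by
    constructor
    · intro y; exact Finset.sum_nonneg fun z _ => mul_nonneg (hv1.1 z) ((hG2 z).1 y)
    · rw [hw]
      simp only
      rw [Finset.sum_comm]
      calc ∑ z, ∑ y, v1 z * G2 z y = ∑ z, v1 z * ∑ y, G2 z y := by simp [Finset.mul_sum]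
        _ = 1 := by simp only [fun z => (hG2 z).2, mul_one]; exact hv1.2
  refine ⟨G1 * G2, fun y => ((1 - b) * v2 y + (1 - a) * b * w y) / (1 - a * b),
    isStoch_mul hG1 hG2, ⟨?_, ?_⟩, ?_⟩
  · intro y
    apply div_nonneg _ hab0.le
    have h1 : 0 ≤ (1 - b) * v2 y := mul_nonneg (by linarith) (hv2.1 y)
    have h2 : 0 ≤ (1 - a) * b * w y := mul_nonneg (mul_nonneg (by linarith) hb0) (hwD.1 y)
    linarith
  · rw [← Finset.sum_div]
    rw [Finset.sum_add_distrib, ← Finset.mul_sum, ← Finset.mul_sum, hv2.2, hwD.2]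
    rw [div_eq_one_iff_eq hab0.ne']
    ring
  · intro x y
    have hG1s := (hG1 x).2
    have hv1s := hv1.2
    have key : (X * Y) x y = a * b * (G1 * G2) x y + (1 - b) * v2 y + (1 - a) * b * w y := by
      simp only [Matrix.mul_apply, hX', hY', hw]
      have expand : ∀ z, (a * G1 x z + (1 - a) * v1 z) * (b * G2 z y + (1 - b) * v2 y)
          = a * b * (G1 x z * G2 z y) + a * (1 - b) * (G1 x z * v2 y)
            + (1 - a) * b * (v1 z * G2 z y) + (1 - a) * (1 - b) * (v1 z * v2 y) := by
        intro z; ring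
      rw [Finset.sum_congr rfl fun z _ => expand z]
      rw [Finset.sum_add_distrib, Finset.sum_add_distrib, Finset.sum_add_distrib]
      rw [← Finset.mul_sum, ← Finset.mul_sum, ← Finset.mul_sum, ← Finset.mul_sum]
      rw [show (∑ z, G1 x z * v2 y) = (∑ z, G1 x z) * v2 y by rw [Finset.sum_mul]]
      rw [show (∑ z, v1 z * v2 y) = (∑ z, v1 z) * v2 y by rw [Finset.sum_mul]]
      rw [hG1s, hv1s]
      ring
    rw [key]
    field_simp
    ring


section MI2
variable {α β : Type*} [Fintype α] [Fintype β]

lemma neg_log_card_le_sum {q : β → ℝ} (hq : IsDist q) :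
    -Real.log (Fintype.card β) ≤ ∑ y, q y * Real.log (q y) := by
  rcases isEmpty_or_nonempty β with h | h
  · exfalso
    have := hq.2
    rw [Finset.univ_eq_empty, Finset.sum_empty] at this
    norm_num at this
  have hcard : (0:ℝ) < (Fintype.card β : ℝ) := by
    exact_mod_cast Fintype.card_pos
  set c : ℝ := (Fintype.card β : ℝ) with hc
  have key : ∀ y, q y - c⁻¹ ≤ q y * Real.log (q y) + q y * Real.log c := by
    intro y
    rcases eq_or_lt_of_le (hq.1 y) with h0 | hpos
    · rw [← h0]
      simp
      positivity
    · have h1 : q y - c⁻¹ ≤ q y * Real.log (q y / c⁻¹) :=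
        sub_le_mul_log (hq.1 y) (by positivity) (fun hh => absurd hh (by positivity))
      have h2 : Real.log (q y / c⁻¹) = Real.log (q y) + Real.log c := by
        rw [div_eq_mul_inv, inv_inv, Real.log_mul hpos.ne' hcard.ne']
      rw [h2] at h1
      linarith [h1]
  have hsum := Finset.sum_le_sum (fun y (_ : y ∈ Finset.univ) => key y)
  rw [Finset.sum_sub_distrib, hq.2, Finset.sum_const, Finset.card_univ] at hsum
  rw [Finset.sum_add_distrib, ← Finset.sum_mul, hq.2, one_mul] at hsum
  have : (Fintype.card β : ℝ) * c⁻¹ = 1 := by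
    rw [← hc]; field_simp
  rw [nsmul_eq_mul, this] at hsum
  linarith

lemma mutualInfo_eq_log (p : α → ℝ) (W : Matrix α β ℝ) :
    mutualInfo p W
      = (∑ x, ∑ y, p x * W x y * Real.log (W x y / ∑ x', p x' * W x' y)) / Real.log 2 := by
  simp [mutualInfo, Real.logb, Finset.sum_div, mul_div_assoc]

lemma mutualInfo_const {p : α → ℝ} (hp : IsDist p) {v : β → ℝ}
    {W : Matrix α β ℝ} (hW : ∀ x y, W x y = v y) :
    mutualInfo p W = 0 := by
  unfold mutualInfo
  apply Finset.sum_eq_zero; intro x _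
  apply Finset.sum_eq_zero; intro y _
  have hq : ∑ x', p x' * W x' y = v y := by
    simp only [hW]; rw [← Finset.sum_mul, hp.2, one_mul]
  rw [hq, hW]
  rcases eq_or_ne (v y) 0 with h | h
  · simp [h]
  · rw [div_self h]; simp

lemma mutualInfo_le_log_card_out {p : α → ℝ} {W : Matrix α β ℝ}
    (hp : IsDist p) (hW : IsStoch W) :
    mutualInfo p W ≤ Real.logb 2 (Fintype.card β) := by
  set q : β → ℝ := fun y => ∑ x', p x' * W x' y with hqdef
  have hqnn : ∀ y, 0 ≤ q y := fun y =>
    Finset.sum_nonneg fun x _ => mul_nonneg (hp.1 x) ((hW x).1 y)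
  have hqsum : ∑ y, q y = 1 := by
    rw [hqdef]
    simp only
    rw [Finset.sum_comm]
    calc ∑ x, ∑ y, p x * W x y = ∑ x, p x * ∑ y, W x y := by simp [Finset.mul_sum]
      _ = 1 := by simp only [fun x => (hW x).2, mul_one]; exact hp.2
  have hle : ∀ x y, p x * W x y ≤ q y := fun x y =>
    Finset.single_le_sum (f := fun x' => p x' * W x' y)
      (fun x' _ => mul_nonneg (hp.1 x') ((hW x').1 y)) (Finset.mem_univ x)
  have term : ∀ x y, p x * W x y * Real.log (W x y / q y)
      ≤ p x * W x y * (-Real.log (q y)) := by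
    intro x y
    rcases eq_or_ne (p x * W x y) 0 with h | h
    · rw [h]; simp
    · have hppos : 0 < p x := lt_of_le_of_ne (hp.1 x) (fun hh => h (by rw [← hh]; ring))
      have hWpos : 0 < W x y := by
        rcases eq_or_lt_of_le ((hW x).1 y) with h0 | hh
        · exact absurd (by rw [← h0, mul_zero]) h
        · exact hh
      have hqpos : 0 < q y := lt_of_lt_of_le (mul_pos hppos hWpos) (hle x y)
      have hW1 : W x y ≤ 1 := by
        have := Finset.single_le_sum (f := fun y' => W x y')
          (fun y' _ => (hW x).1 y') (Finset.mem_univ y)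
        rw [(hW x).2] at this; exact this
      have : Real.log (W x y / q y) = Real.log (W x y) - Real.log (q y) :=
        Real.log_div hWpos.ne' hqpos.ne'
      rw [this]
      have hlogW : Real.log (W x y) ≤ 0 := Real.log_nonpos hWpos.le hW1
      have : p x * W x y ≥ 0 := (mul_pos hppos hWpos).le
      nlinarith
  have step1 : ∑ x, ∑ y, p x * W x y * Real.log (W x y / q y)
      ≤ ∑ x, ∑ y, p x * W x y * (-Real.log (q y)) :=
    Finset.sum_le_sum fun x _ => Finset.sum_le_sum fun y _ => term x y
  have step2 : ∑ x, ∑ y, p x * W x y * (-Real.log (q y))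
      = -∑ y, q y * Real.log (q y) := by
    rw [Finset.sum_comm]
    have e : ∀ y, ∑ x, p x * W x y * (-Real.log (q y)) = -(q y * Real.log (q y)) := by
      intro y
      rw [← Finset.sum_mul]
      have : (∑ x, p x * W x y) = q y := by simp only [hqdef]
      rw [this]; ring
    rw [Finset.sum_congr rfl fun y _ => e y]
    simp
  have step3 := neg_log_card_le_sum (q := q) ⟨hqnn, hqsum⟩
  have hS : (∑ x, ∑ y, p x * W x y * Real.log (W x y / q y))
      ≤ Real.log (Fintype.card β) := by
    calc (∑ x, ∑ y, p x * W x y * Real.log (W x y / q y))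
        ≤ ∑ x, ∑ y, p x * W x y * (-Real.log (q y)) := step1
      _ = -∑ y, q y * Real.log (q y) := step2
      _ ≤ Real.log (Fintype.card β) := by linarith
  rw [mutualInfo_eq_log, Real.logb]
  have hlog2 : (0:ℝ) < Real.log 2 := Real.log_pos (by norm_num)
  have : (∑ x, ∑ y, p x * W x y * Real.log (W x y / ∑ x', p x' * W x' y))
      = (∑ x, ∑ y, p x * W x y * Real.log (W x y / q y)) := rfl
  rw [this]
  gcongr


lemma mutualInfo_le_log_card_in {p : α → ℝ} {W : Matrix α β ℝ}
    (hp : IsDist p) (hW : IsStoch W) :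
    mutualInfo p W ≤ Real.logb 2 (Fintype.card α) := by
  set q : β → ℝ := fun y => ∑ x', p x' * W x' y with hqdef
  have hle : ∀ x y, p x * W x y ≤ q y := fun x y =>
    Finset.single_le_sum (f := fun x' => p x' * W x' y)
      (fun x' _ => mul_nonneg (hp.1 x') ((hW x').1 y)) (Finset.mem_univ x)
  have term : ∀ x y, p x * W x y * Real.log (W x y / q y)
      ≤ p x * W x y * (-Real.log (p x)) := by
    intro x y
    rcases eq_or_ne (p x * W x y) 0 with h | h
    · rw [h]; simp
    · have hppos : 0 < p x := lt_of_le_of_ne (hp.1 x) (fun hh => h (by rw [← hh]; ring))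
      have hWpos : 0 < W x y := by
        rcases eq_or_lt_of_le ((hW x).1 y) with h0 | hh
        · exact absurd (by rw [← h0, mul_zero]) h
        · exact hh
      have hqpos : 0 < q y := lt_of_lt_of_le (mul_pos hppos hWpos) (hle x y)
      have hsplit : Real.log (W x y / q y)
          = Real.log (p x * W x y / q y) - Real.log (p x) := by
        rw [show W x y / q y = (p x * W x y / q y) / p x by
          field_simp]
        exact Real.log_div (by positivity) hppos.ne'
      have hfrac : Real.log (p x * W x y / q y) ≤ 0 :=
        Real.log_nonpos (by positivity) ((div_le_one hqpos).mpr (hle x y))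
      rw [hsplit]
      have hnn : (0:ℝ) ≤ p x * W x y := (mul_pos hppos hWpos).le
      nlinarith
  have step1 : ∑ x, ∑ y, p x * W x y * Real.log (W x y / q y)
      ≤ ∑ x, ∑ y, p x * W x y * (-Real.log (p x)) :=
    Finset.sum_le_sum fun x _ => Finset.sum_le_sum fun y _ => term x y
  have step2 : ∑ x, ∑ y, p x * W x y * (-Real.log (p x))
      = -∑ x, p x * Real.log (p x) := by
    have e : ∀ x, ∑ y, p x * W x y * (-Real.log (p x)) = -(p x * Real.log (p x)) := by
      intro x
      have : ∀ y, p x * W x y * (-Real.log (p x))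
          = (p x * (-Real.log (p x))) * W x y := fun y => by ring
      rw [Finset.sum_congr rfl fun y _ => this y, ← Finset.mul_sum, (hW x).2]
      ring
    rw [Finset.sum_congr rfl fun x _ => e x]
    simp
  have step3 := neg_log_card_le_sum (q := p) hp
  have hS : (∑ x, ∑ y, p x * W x y * Real.log (W x y / q y))
      ≤ Real.log (Fintype.card α) := by linarith
  rw [mutualInfo_eq_log, Real.logb]
  have hlog2 : (0:ℝ) < Real.log 2 := Real.log_pos (by norm_num)
  have e : (∑ x, ∑ y, p x * W x y * Real.log (W x y / ∑ x', p x' * W x' y))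
      = (∑ x, ∑ y, p x * W x y * Real.log (W x y / q y)) := rfl
  rw [e]
  gcongr

lemma mutualInfo_convex {p : α → ℝ} (hp : IsDist p) {t : ℝ} (ht0 : 0 < t) (ht1 : t < 1)
    {W W1 W2 : Matrix α β ℝ} (h1 : IsStoch W1) (h2 : IsStoch W2)
    (hWd : ∀ x y, W x y = t * W1 x y + (1 - t) * W2 x y) :
    mutualInfo p W ≤ t * mutualInfo p W1 + (1 - t) * mutualInfo p W2 := by
  have ht1' : (0:ℝ) < 1 - t := by linarith
  set q1 : β → ℝ := fun y => ∑ x', p x' * W1 x' y with hq1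
  set q2 : β → ℝ := fun y => ∑ x', p x' * W2 x' y with hq2
  have hq1nn : ∀ y, 0 ≤ q1 y := fun y =>
    Finset.sum_nonneg fun x _ => mul_nonneg (hp.1 x) ((h1 x).1 y)
  have hq2nn : ∀ y, 0 ≤ q2 y := fun y =>
    Finset.sum_nonneg fun x _ => mul_nonneg (hp.1 x) ((h2 x).1 y)
  have hle1 : ∀ x y, p x * W1 x y ≤ q1 y := fun x y =>
    Finset.single_le_sum (f := fun x' => p x' * W1 x' y)
      (fun x' _ => mul_nonneg (hp.1 x') ((h1 x').1 y)) (Finset.mem_univ x)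
  have hle2 : ∀ x y, p x * W2 x y ≤ q2 y := fun x y =>
    Finset.single_le_sum (f := fun x' => p x' * W2 x' y)
      (fun x' _ => mul_nonneg (hp.1 x') ((h2 x').1 y)) (Finset.mem_univ x)
  have hq : ∀ y, (∑ x', p x' * W x' y) = t * q1 y + (1 - t) * q2 y := by
    intro y
    simp only [hq1, hq2]
    rw [Finset.mul_sum, Finset.mul_sum, ← Finset.sum_add_distrib]
    refine Finset.sum_congr rfl fun x _ => ?_
    rw [hWd]; ring
  have term : ∀ x y,
      p x * W x y * Real.log (W x y / (t * q1 y + (1 - t) * q2 y))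
        ≤ t * (p x * W1 x y * Real.log (W1 x y / q1 y))
          + (1 - t) * (p x * W2 x y * Real.log (W2 x y / q2 y)) := by
    intro x y
    rcases eq_or_lt_of_le (hp.1 x) with h0 | hppos
    · rw [← h0]; simp
    · have ha1 : 0 ≤ t * (p x * W1 x y) :=
        mul_nonneg ht0.le (mul_nonneg (hp.1 x) ((h1 x).1 y))
      have ha2 : 0 ≤ (1 - t) * (p x * W2 x y) :=
        mul_nonneg ht1'.le (mul_nonneg (hp.1 x) ((h2 x).1 y))
      have hb1 : 0 ≤ t * (p x * q1 y) := mul_nonneg ht0.le (mul_nonneg (hp.1 x) (hq1nn y))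
      have hb2 : 0 ≤ (1 - t) * (p x * q2 y) := mul_nonneg ht1'.le (mul_nonneg (hp.1 x) (hq2nn y))
      have hzero1 : t * (p x * q1 y) = 0 → t * (p x * W1 x y) = 0 := by
        intro hh
        have hq10 : q1 y = 0 := by
          have := mul_eq_zero.mp hh
          rcases this with h' | h'
          · exact absurd h' ht0.ne'
          · rcases mul_eq_zero.mp h' with h'' | h''
            · exact absurd h'' hppos.ne'
            · exact h''
        have hle := hle1 x y
        rw [hq10] at hle
        have : p x * W1 x y = 0 :=
          le_antisymm hle (mul_nonneg (hp.1 x) ((h1 x).1 y))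
        rw [this, mul_zero]
      have hzero2 : (1 - t) * (p x * q2 y) = 0 → (1 - t) * (p x * W2 x y) = 0 := by
        intro hh
        have hq20 : q2 y = 0 := by
          have := mul_eq_zero.mp hh
          rcases this with h' | h'
          · exact absurd h' ht1'.ne'
          · rcases mul_eq_zero.mp h' with h'' | h''
            · exact absurd h'' hppos.ne'
            · exact h''
        have hle := hle2 x y
        rw [hq20] at hle
        have : p x * W2 x y = 0 :=
          le_antisymm hle (mul_nonneg (hp.1 x) ((h2 x).1 y))
        rw [this, mul_zero]
      have L := logsum2 ha1 ha2 hb1 hb2 hzero1 hzero2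
      have e0 : t * (p x * W1 x y) + (1 - t) * (p x * W2 x y) = p x * W x y := by
        rw [hWd]; ring
      have eb : t * (p x * q1 y) + (1 - t) * (p x * q2 y)
          = p x * (t * q1 y + (1 - t) * q2 y) := by ring
      have ediv : p x * W x y / (p x * (t * q1 y + (1 - t) * q2 y))
          = W x y / (t * q1 y + (1 - t) * q2 y) := mul_div_mul_left _ _ hppos.ne'
      have e1 : t * (p x * W1 x y) / (t * (p x * q1 y)) = W1 x y / q1 y := by
        rw [mul_div_mul_left _ _ ht0.ne', mul_div_mul_left _ _ hppos.ne']
      have e2 : (1 - t) * (p x * W2 x y) / ((1 - t) * (p x * q2 y)) = W2 x y / q2 y := by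
        rw [mul_div_mul_left _ _ ht1'.ne', mul_div_mul_left _ _ hppos.ne']
      rw [e0, eb, ediv, e1, e2] at L
      calc p x * W x y * Real.log (W x y / (t * q1 y + (1 - t) * q2 y))
          ≤ t * (p x * W1 x y) * Real.log (W1 x y / q1 y)
            + (1 - t) * (p x * W2 x y) * Real.log (W2 x y / q2 y) := L
        _ = t * (p x * W1 x y * Real.log (W1 x y / q1 y))
            + (1 - t) * (p x * W2 x y * Real.log (W2 x y / q2 y)) := by ring
  have hlog2 : (0:ℝ) < Real.log 2 := Real.log_pos (by norm_num)
  rw [mutualInfo_eq_log, mutualInfo_eq_log, mutualInfo_eq_log]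
  rw [← mul_div_assoc, ← mul_div_assoc, ← add_div]
  have erw : (∑ x, ∑ y, p x * W x y * Real.log (W x y / ∑ x', p x' * W x' y))
      = ∑ x, ∑ y, p x * W x y * Real.log (W x y / (t * q1 y + (1 - t) * q2 y)) := by
    refine Finset.sum_congr rfl fun x _ => Finset.sum_congr rfl fun y _ => ?_
    rw [hq y]
  rw [erw]
  gcongr (?_ : ℝ) / _
  calc ∑ x, ∑ y, p x * W x y * Real.log (W x y / (t * q1 y + (1 - t) * q2 y))
      ≤ ∑ x, ∑ y, (t * (p x * W1 x y * Real.log (W1 x y / q1 y))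
          + (1 - t) * (p x * W2 x y * Real.log (W2 x y / q2 y))) :=
        Finset.sum_le_sum fun x _ => Finset.sum_le_sum fun y _ => term x y
    _ = t * (∑ x, ∑ y, p x * W1 x y * Real.log (W1 x y / q1 y))
        + (1 - t) * (∑ x, ∑ y, p x * W2 x y * Real.log (W2 x y / q2 y)) := by
      rw [Finset.mul_sum, Finset.mul_sum, ← Finset.sum_add_distrib]
      refine Finset.sum_congr rfl fun x _ => ?_
      rw [Finset.mul_sum, Finset.mul_sum, ← Finset.sum_add_distrib]
    _ = t * (∑ x, ∑ y, p x * W1 x y * Real.log (W1 x y / ∑ x', p x' * W1 x' y))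
        + (1 - t) * (∑ x, ∑ y, p x * W2 x y * Real.log (W2 x y / ∑ x', p x' * W2 x' y)) := rfl

end MI2

section Era
variable {A : Type} [Fintype A] [DecidableEq A] {α β : Type*} [Fintype α] [Fintype β]

lemma eraCh_isStoch {ε : ℝ} (h0 : 0 ≤ ε) (h1 : ε ≤ 1) : IsStoch (eraCh A ε) := by
  intro x
  constructor
  · intro y
    rcases x with _ | a <;> rcases y with _ | b
    · simp [eraCh]
    · simp [eraCh]
    · simp [eraCh]; linarith
    · simp only [eraCh, Matrix.of_apply]
      norm_num
      split_ifs <;> linarith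
  · cases x with
    | none => simp [eraCh, Fintype.sum_option]
    | some a =>
      simp [eraCh, Fintype.sum_option, Finset.sum_ite_eq']

lemma tensorPow_isStoch {Q : Matrix α β ℝ} (hQ : IsStoch Q) (N : ℕ) :
    IsStoch (tensorPow N Q) := by
  intro u
  constructor
  · intro y
    show (0:ℝ) ≤ ∏ i, Q (u i) (y i)
    exact Finset.prod_nonneg fun i _ => (hQ (u i)).1 (y i)
  · show ∑ y : Fin N → β, ∏ i, Q (u i) (y i) = 1
    have e : (∏ i : Fin N, ∑ b, Q (u i) b) = ∑ y : Fin N → β, ∏ i, Q (u i) (y i) := by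
      rw [Finset.prod_univ_sum, Fintype.piFinset_univ]
    rw [← e, Finset.prod_congr rfl fun i _ => (hQ (u i)).2, Finset.prod_const_one]

lemma eraCh_tensor_ge {ε : ℝ} (h0 : 0 ≤ ε) (h1 : ε ≤ 1) (N : ℕ) (x : Fin N → Option A) :
    ε ^ N ≤ tensorPow N (eraCh A ε) x (fun _ => none) := by
  show ε ^ N ≤ ∏ i : Fin N, eraCh A ε (x i) none
  have hεpow : ε ^ N = ∏ _i : Fin N, ε := by
    rw [Finset.prod_const, Finset.card_univ, Fintype.card_fin]
  rw [hεpow]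
  apply Finset.prod_le_prod (fun i _ => h0)
  intro i _
  cases hx : x i <;> simp [eraCh] <;> linarith

lemma eraCh_tensor_isMix {ε : ℝ} (hε : 0 < ε) (hε1 : ε < 1) {N : ℕ} (hN : 0 < N) :
    IsMix (1 - ε ^ N) (tensorPow N (eraCh A ε)) := by
  have hS : IsStoch (tensorPow N (eraCh A ε)) :=
    tensorPow_isStoch (eraCh_isStoch hε.le hε1.le) N
  have hεN0 : 0 < ε ^ N := pow_pos hε N
  have hεN1 : ε ^ N < 1 := pow_lt_one₀ hε.le hε1 hN.ne'
  have hc0 : (0:ℝ) < 1 - ε ^ N := by linarith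
  set v : (Fin N → Option A) → ℝ := fun y => if y = (fun _ => none) then 1 else 0 with hv
  refine ⟨Matrix.of fun x y => (tensorPow N (eraCh A ε) x y - ε ^ N * v y) / (1 - ε ^ N),
    v, ?_, ⟨?_, ?_⟩, ?_⟩
  · intro x
    constructor
    · intro y
      apply div_nonneg _ hc0.le
      rcases eq_or_ne y (fun _ => none) with h | h
      · have := eraCh_tensor_ge (A := A) hε.le hε1.le N x
        rw [h]
        simp only [hv, if_pos rfl, mul_one]
        linarith
      · simp only [hv, if_neg h, mul_zero]
        have := (hS x).1 y
        linarith
    · simp only [Matrix.of_apply]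
      rw [← Finset.sum_div]
      rw [Finset.sum_sub_distrib, (hS x).2, ← Finset.mul_sum]
      have : ∑ y, v y = 1 := by simp [hv, Finset.sum_ite_eq']
      rw [this, mul_one]
      field_simp
  · intro y
    simp only [hv]
    split_ifs <;> norm_num
  · simp [hv, Finset.sum_ite_eq']
  · intro x y
    simp only [Matrix.of_apply]
    have h1c : 1 - (1 - ε ^ N) = ε ^ N := by ring
    rw [h1c]
    field_simp
    ring

end Era


lemma chain_isMix {β γ : Type*} [Fintype β] [Fintype γ] {T : Matrix β γ ℝ}
    {Φ : ℕ → Matrix γ β ℝ} (hΦ : ∀ ℓ, IsStoch (Φ ℓ)) {c : ℝ}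
    (hc0 : 0 ≤ c) (hc1 : c < 1) (hT : IsMix c T) :
    ∀ n, IsMix (c ^ (n + 1)) (chain (fun _ => T) Φ n)
  | 0 => by
      rw [pow_one]
      exact hT
  | (n + 1) => by
      have ih := chain_isMix hΦ hc0 hc1 hT n
      have h1 : IsMix (c ^ (n + 1)) (chain (fun _ => T) Φ n * Φ n) := ih.mul_stoch (hΦ n)
      have h2 := mix_mul_mix (pow_nonneg hc0 (n + 1)) (pow_le_one₀ hc0 hc1.le)
        hc0 hc1.le (by
          calc c ^ (n + 1) * c = c ^ (n + 2) := (pow_succ c (n + 1)).symm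
            _ < 1 := pow_lt_one₀ hc0 hc1 (Nat.succ_ne_zero _)) h1 hT
      show IsMix (c ^ (n + 1 + 1)) (chain (fun _ => T) Φ n * Φ n * T)
      rw [pow_succ c (n + 1)]
      exact h2

theorem stmt2 {A : Type} [Fintype A] [DecidableEq A] (hA : 2 ≤ Fintype.card A)
    (ε : ℝ) (hε : 0 < ε) (hε1 : ε < 1)
    (L M N : ℕ) (hL : 0 < L) (hM : 0 < M) (hN : 0 < N)
    (F : Matrix (Fin M → A) (Fin N → Option A) ℝ) (hF : IsStoch F)
    (Φ : ℕ → Matrix (Fin N → Option A) (Fin N → Option A) ℝ) (hΦ : ∀ ℓ, IsStoch (Φ ℓ))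
    (p : (Fin M → A) → ℝ) (hp : IsDist p) :
    (1 / (N : ℝ)) * mutualInfo p (endToEnd L M N F (fun _ => eraCh A ε) Φ)
      ≤ ((1 - ε ^ N) ^ L / (N : ℝ)) *
          min ((M : ℝ) * Real.logb 2 (Fintype.card A))
              ((N : ℝ) * Real.logb 2 (Fintype.card (Option A))) := by
  have hεN0 : 0 < ε ^ N := pow_pos hε N
  have hεN1 : ε ^ N < 1 := pow_lt_one₀ hε.le hε1 hN.ne'
  have hc0 : (0:ℝ) < 1 - ε ^ N := by linarith
  have hc1 : 1 - ε ^ N < 1 := by linarith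
  have hTmix : IsMix (1 - ε ^ N) (tensorPow N (eraCh A ε)) :=
    eraCh_tensor_isMix hε hε1 hN
  have hchain := chain_isMix hΦ hc0.le hc1 hTmix (L - 1)
  have hmix : IsMix ((1 - ε ^ N) ^ L) (endToEnd L M N F (fun _ => eraCh A ε) Φ) := by
    have h := stoch_mul_mix hF hchain
    rw [show L - 1 + 1 = L from Nat.succ_pred_eq_of_pos hL] at h
    exact h
  obtain ⟨G, v, hG, hv, hWd⟩ := hmix
  have ht0 : 0 < (1 - ε ^ N) ^ L := pow_pos hc0 L
  have ht1 : (1 - ε ^ N) ^ L < 1 := pow_lt_one₀ hc0.le hc1 hL.ne'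
  set V : Matrix (Fin M → A) (Fin N → Option A) ℝ := Matrix.of fun _ y => v y with hVdef
  have hVs : IsStoch V := fun x => ⟨fun y => hv.1 y, hv.2⟩
  have hconv := mutualInfo_convex hp ht0 ht1 hG hVs hWd
  have hV0 : mutualInfo p V = 0 := mutualInfo_const hp (v := v) (fun x y => rfl)
  rw [hV0, mul_zero, add_zero] at hconv
  have hout : mutualInfo p G ≤ Real.logb 2 (Fintype.card (Fin N → Option A)) :=
    mutualInfo_le_log_card_out hp hG
  have hin : mutualInfo p G ≤ Real.logb 2 (Fintype.card (Fin M → A)) :=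
    mutualInfo_le_log_card_in hp hG
  have e1 : Real.logb 2 (Fintype.card (Fin M → A))
      = (M : ℝ) * Real.logb 2 (Fintype.card A) := by
    rw [Fintype.card_fun, Fintype.card_fin, Nat.cast_pow, Real.logb_pow]
  have e2 : Real.logb 2 (Fintype.card (Fin N → Option A))
      = (N : ℝ) * Real.logb 2 (Fintype.card (Option A)) := by
    rw [Fintype.card_fun, Fintype.card_fin, Nat.cast_pow, Real.logb_pow]
  have hGmin : mutualInfo p G
      ≤ min ((M : ℝ) * Real.logb 2 (Fintype.card A))
            ((N : ℝ) * Real.logb 2 (Fintype.card (Option A))) :=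
    le_min (e1 ▸ hin) (e2 ▸ hout)
  have hbound : mutualInfo p (endToEnd L M N F (fun _ => eraCh A ε) Φ)
      ≤ (1 - ε ^ N) ^ L * min ((M : ℝ) * Real.logb 2 (Fintype.card A))
            ((N : ℝ) * Real.logb 2 (Fintype.card (Option A))) :=
    hconv.trans (mul_le_mul_of_nonneg_left hGmin ht0.le)
  have hNpos : (0:ℝ) < (N : ℝ) := by exact_mod_cast hN
  calc (1 / (N : ℝ)) * mutualInfo p (endToEnd L M N F (fun _ => eraCh A ε) Φ)
      ≤ (1 / (N : ℝ)) * ((1 - ε ^ N) ^ L * min ((M : ℝ) * Real.logb 2 (Fintype.card A))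
          ((N : ℝ) * Real.logb 2 (Fintype.card (Option A)))) :=
        mul_le_mul_of_nonneg_left hbound (by positivity)
    _ = ((1 - ε ^ N) ^ L / (N : ℝ)) * min ((M : ℝ) * Real.logb 2 (Fintype.card A))
          ((N : ℝ) * Real.logb 2 (Fintype.card (Option A))) := by ring
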